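/- Let g be an invertible real 3×3 matrix such that for every symmetric traceless 3×3 matrix Q, the matrix g Q gᵀ is also traceless. Then there exist a real number λ > 0 and an orthogonal matrix R such that g = λ R. -/

import Mathlib

open Matrix

lemma aux_sq_zero (Q : Matrix (Fin 3) (Fin 3) ℝ) (hQ : (Qᵀ * Q).trace = 0) : Q = 0 := by
  have h : ∀ i ∈ Finset.univ, ∀ j ∈ (Finset.univ : Finset (Fin 3)), Q j i * Q j i = 0 := by
    have hs : ∑ i : Fin 3, ∑ j : Fin 3, Q j i * Q j i = 0 := by
      simpa [Matrix.trace, Matrix.mul_apply, Matrix.diag] using hQ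
    have := (Finset.sum_eq_zero_iff_of_nonneg (fun i _ =>
      Finset.sum_nonneg fun j _ => mul_self_nonneg (Q j i))).mp hs
    intro i hi j hj
    exact (Finset.sum_eq_zero_iff_of_nonneg fun j _ => mul_self_nonneg (Q j i)).mp
      (this i hi) j hj
  ext i j
  have := h j (Finset.mem_univ j) i (Finset.mem_univ i)
  simpa using mul_self_eq_zero.mp this

theorem stmt_0 (g : Matrix (Fin 3) (Fin 3) ℝ) (hg : IsUnit g)
    (h : ∀ Q : Matrix (Fin 3) (Fin 3) ℝ, Q.IsSymm → Q.trace = 0 →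
      (g * Q * gᵀ).trace = 0) :
    ∃ (l : ℝ) (R : Matrix (Fin 3) (Fin 3) ℝ),
      0 < l ∧ Rᵀ * R = 1 ∧ g = l • R := by
  set A : Matrix (Fin 3) (Fin 3) ℝ := gᵀ * g with hA
  set c : ℝ := A.trace with hc
  set Q : Matrix (Fin 3) (Fin 3) ℝ := A - (c / 3) • 1 with hQ
  have hAsymm : A.IsSymm := Matrix.isSymm_transpose_mul_self g
  have hQsymm : Q.IsSymm := by
    rw [hQ]
    exact hAsymm.sub ((Matrix.isSymm_one).smul (c/3))
  have hQtr : Q.trace = 0 := by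
    simp [hQ, Matrix.trace_sub, Matrix.trace_smul, Matrix.trace_one]
    exact sub_eq_zero.mpr hc.symm
  have key := h Q hQsymm hQtr
  -- trace (g * Q * gᵀ) = trace (A * Q)
  have h1 : (g * Q * gᵀ).trace = (A * Q).trace := by
    rw [Matrix.trace_mul_comm, hA, mul_assoc]
  have h2 : (A * Q).trace = (Qᵀ * Q).trace := by
    have : A * Q = Qᵀ * Q + (c/3) • Q := by
      rw [hQsymm.eq, hQ]
      noncomm_ring
    rw [this, Matrix.trace_add, Matrix.trace_smul, hQtr]
    simp
  have hQ0 : Q = 0 := aux_sq_zero Q (by rw [← h2, ← h1]; exact key)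
  have hAc : A = (c / 3) • 1 := by
    have := sub_eq_zero.mp hQ0
    simpa [hQ] using this
  -- c > 0 since g is a unit
  have hgne : g ≠ 0 := by
    rintro rfl
    simpa using hg.ne_zero (by simp)
  have hcnn : 0 ≤ c := by
    have hceq : c = ∑ i : Fin 3, ∑ j : Fin 3, g j i * g j i := by
      simp [hc, hA, Matrix.trace, Matrix.mul_apply, Matrix.diag]
    rw [hceq]
    exact Finset.sum_nonneg fun i _ => Finset.sum_nonneg fun j _ => mul_self_nonneg _
  have hcpos : 0 < c := by
    rcases hcnn.lt_or_eq with h' | h'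
    · exact h'
    · exfalso
      apply hgne
      apply aux_sq_zero
      rw [← hA, ← hc, ← h']
  set l : ℝ := Real.sqrt (c / 3) with hl
  have hc3 : 0 < c / 3 := by linarith
  have hlpos : 0 < l := Real.sqrt_pos.mpr hc3
  refine ⟨l, l⁻¹ • g, hlpos, ?_, ?_⟩
  · have hll : l * l = c / 3 := Real.mul_self_sqrt hc3.le
    rw [Matrix.transpose_smul, Matrix.smul_mul, Matrix.mul_smul, ← hA, hAc,
      smul_smul, smul_smul]
    rw [show l⁻¹ * l⁻¹ * (c/3) = 1 by field_simp [← hll]; linear_combination (-3) * hll]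
    simp
  · rw [smul_smul, mul_inv_cancel₀ hlpos.ne', one_smul]
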